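/- arXiv:1303.6806 — 2 statements merged into one kernel-verified Lean document; each statement's English description precedes it below -/
import Mathlib

section
/- Let A = (ℤ/2ℤ)^k × (ℤ/2ℤ)^l with k ≥ 1, acting on a k-dimensional complex vector space V_Z by the representation refl_k ⊠ triv_l, where refl_k = ⊕_{i=1}^k sgn^{(i)} (the i-th factor of (ℤ/2ℤ)^k acts by -1 on the i-th coordinate and trivially elsewhere, and (ℤ/2ℤ)^l acts trivially). Then for every one-dimensional character φ of A, the (-1)-elliptic self-pairing ⟨φ,φ⟩^{-1}_A := ⟨φ ⊗ ∧V_Z, φ⟩_A equals 1, and if φ₁ ⊗ φ₂ is nontrivial on the (ℤ/2ℤ)^l factor then ⟨φ₁,φ₂⟩^{-1}_A = 0. -/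
noncomputable section

/-- The group `A = (ℤ/2ℤ)^k × (ℤ/2ℤ)^l` (written multiplicatively). -/
abbrev A4 (k l : ℕ) :=
  Multiplicative (Fin k → ZMod 2) × Multiplicative (Fin l → ZMod 2)

/-- The matrix by which `a ∈ A` acts on the `k`-dimensional space `V_Z` for the
representation `refl_k ⊠ triv_l` (the `i`-th factor of `(ℤ/2ℤ)^k` acts by `-1` on the
`i`-th coordinate, and `(ℤ/2ℤ)^l` acts trivially). -/
def M4 {k l : ℕ} (a : A4 k l) : Matrix (Fin k) (Fin k) ℂ :=
  Matrix.diagonal fun i => (-1 : ℂ) ^ ((Multiplicative.toAdd a.1) i).val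

/-- The `(-1)`-elliptic pairing `⟨φ, φ'⟩^{-1}_A = (1/|A|) ∑_a φ(a) φ'(a) det_{V_Z}(1+a)`. -/
def pair4 (k l : ℕ) (φ φ' : A4 k l →* ℂ) : ℂ :=
  (1 / (Fintype.card (A4 k l) : ℂ)) *
    ∑ a : A4 k l, φ a * φ' a * Matrix.det ((1 : Matrix (Fin k) (Fin k) ℂ) + M4 a)

lemma det_aux {k l : ℕ} (a : A4 k l) :
    Matrix.det ((1 : Matrix (Fin k) (Fin k) ℂ) + M4 a) =
      if a.1 = 1 then (2:ℂ)^k else 0 := by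
  have h1 : (1 : Matrix (Fin k) (Fin k) ℂ) + M4 a =
      Matrix.diagonal (fun i => 1 + (-1:ℂ) ^ ((Multiplicative.toAdd a.1) i).val) := by
    rw [M4, ← Matrix.diagonal_one, Matrix.diagonal_add]
  rw [h1, Matrix.det_diagonal]
  by_cases h : a.1 = 1
  · rw [if_pos h, h]
    simp
    norm_num
  · rw [if_neg h]
    have : ∃ i, Multiplicative.toAdd a.1 i ≠ 0 := by
      by_contra hc
      push_neg at hc
      exact h (Multiplicative.toAdd.injective (funext fun i => hc i))
    obtain ⟨i, hi⟩ := this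
    apply Finset.prod_eq_zero (Finset.mem_univ i)
    have hv : (Multiplicative.toAdd a.1 i).val = 1 := by
      have := (Multiplicative.toAdd a.1 i).val_lt
      have h0 : (Multiplicative.toAdd a.1 i).val ≠ 0 := by
        simpa [ZMod.val_eq_zero] using hi
      omega
    rw [hv]; ring

lemma pair4_eq (k l : ℕ) (φ₁ φ₂ : A4 k l →* ℂ) :
    pair4 k l φ₁ φ₂ =
      (1 / (2^l : ℂ)) * ∑ y : Multiplicative (Fin l → ZMod 2), φ₁ (1, y) * φ₂ (1, y) := by
  have hcard : (Fintype.card (A4 k l) : ℂ) = 2^k * 2^l := by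
    simp [Fintype.card_prod, Fintype.card_fun]
  rw [pair4, hcard, Fintype.sum_prod_type]
  rw [Finset.sum_eq_single (1 : Multiplicative (Fin k → ZMod 2))]
  · have : ∀ y : Multiplicative (Fin l → ZMod 2),
        φ₁ (1, y) * φ₂ (1, y) * Matrix.det ((1 : Matrix (Fin k) (Fin k) ℂ) + M4 ((1 : Multiplicative (Fin k → ZMod 2)), y)) =
        φ₁ (1, y) * φ₂ (1, y) * 2^k := by
      intro y
      simp [det_aux]
    rw [Finset.sum_congr rfl (fun y _ => this y), ← Finset.sum_mul]
    have h2k : (2:ℂ)^k ≠ 0 := pow_ne_zero _ two_ne_zero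
    field_simp
  · intro x _ hx
    apply Finset.sum_eq_zero
    intro y _
    rw [det_aux, if_neg hx, mul_zero]
  · simp

lemma sq_one {k l : ℕ} (φ : A4 k l →* ℂ) (y : Multiplicative (Fin l → ZMod 2)) :
    φ (1, y) * φ (1, y) = 1 := by
  have hyy : y * y = 1 := by
    apply Multiplicative.toAdd.injective
    funext i
    show Multiplicative.toAdd y i + Multiplicative.toAdd y i = 0
    exact CharTwo.add_self_eq_zero _
  have : ((1, y) : A4 k l) * (1, y) = 1 := by
    rw [Prod.mk_mul_mk, one_mul, hyy]
    rfl
  rw [← map_mul, this, map_one]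

/-- For `A = (ℤ/2ℤ)^k × (ℤ/2ℤ)^l`, `k ≥ 1`, acting on `V_Z = ℂ^k`
by `refl_k ⊠ triv_l`:  every one-dimensional character `φ` of `A` satisfies
`⟨φ,φ⟩^{-1}_A = 1`, and if `φ₁ ⊗ φ₂` is nontrivial on the `(ℤ/2ℤ)^l` factor then
`⟨φ₁,φ₂⟩^{-1}_A = 0`. -/
theorem stmt_4 (k l : ℕ) (hk : 0 < k) :
    (∀ φ : A4 k l →* ℂ, pair4 k l φ φ = 1) ∧
    (∀ φ₁ φ₂ : A4 k l →* ℂ,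
      (∃ y : Multiplicative (Fin l → ZMod 2), φ₁ (1, y) * φ₂ (1, y) ≠ 1) →
        pair4 k l φ₁ φ₂ = 0) := by
  constructor
  · intro φ
    rw [pair4_eq]
    have : ∀ y : Multiplicative (Fin l → ZMod 2), φ (1, y) * φ (1, y) = 1 := sq_one φ
    rw [Finset.sum_congr rfl (fun y _ => this y)]
    simp
  · intro φ₁ φ₂ ⟨y0, hy0⟩
    rw [pair4_eq]
    set χ : Multiplicative (Fin l → ZMod 2) → ℂ := fun y => φ₁ (1, y) * φ₂ (1, y) with hχ
    have hmul : ∀ y y', χ (y * y') = χ y * χ y' := by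
      intro y y'
      simp only [hχ]
      have h1 : ((1, y * y') : A4 k l) = (1, y) * (1, y') := by
        rw [Prod.mk_mul_mk, one_mul]
      rw [h1, map_mul, map_mul]; ring
    have hS : ∑ y, χ y = χ y0 * ∑ y, χ y := by
      rw [Finset.mul_sum]
      exact Fintype.sum_equiv (Equiv.mulLeft y0) (fun y => χ y0 * χ y) χ
        (fun y => (hmul y0 y).symm) |>.symm
    have : (χ y0 - 1) * ∑ y, χ y = 0 := by
      rw [sub_mul, one_mul, ← hS, sub_self]
    rcases mul_eq_zero.1 this with h | h
    · exact absurd (by linear_combination h : χ y0 = 1) hy0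
    · rw [h, mul_zero]
end
end

section
/- Let W be a finite group acting on a finite-dimensional complex vector space V, and let 𝒮 be a (virtual) representation of a double cover W̃ of W whose character squared satisfies |tr_𝒮(w̃)|² = a_V·det_V(1+w). Then the linear map ι: R(W) → R(W̃), ι(σ) = σ ⊗ 𝒮, satisfies ⟨ι(σ), ι(σ')⟩_{W̃} = a_V·⟨σ, σ'⟩^{-1}_W for all virtual characters σ, σ', where ⟨σ,σ'⟩^{-1}_W = (1/|W|)∑_w σ(w)σ'(w)det_V(1+w). In particular ι kills exactly the radical of ⟨,⟩^{-1}_W and induces an injection on R(W)/rad⟨,⟩^{-1}_W. -/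
noncomputable section

/-- Let `p : W̃ → W` be a double cover of a finite group with
central kernel `{1, z}`, `V` a finite-dimensional complex `W`-representation, and `𝒮`
a genuine (virtual) character of `W̃` satisfying `|𝒮(w̃)|² = a_V·det_V(1 + p(w̃))`.
Then `ι(σ) = σ ⊗ 𝒮` satisfies `⟨ι(σ),ι(σ')⟩_{W̃} = a_V·⟨σ,σ'⟩^{-1}_W` for all virtual
characters `σ, σ'`, and `ι` kills exactly the radical of `⟨,⟩^{-1}_W` (so it induces
an injection on `R(W)/rad`). -/
theorem stmt_11 {Wt W V : Type*} [Group Wt] [Fintype Wt] [Group W] [Fintype W]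
    [AddCommGroup V] [Module ℂ V] [FiniteDimensional ℂ V]
    (p : Wt →* W) (hp : Function.Surjective p)
    (z : Wt) (hz1 : z ≠ 1) (hzc : ∀ g : Wt, z * g = g * z)
    (hker : ∀ g : Wt, p g = 1 ↔ g = 1 ∨ g = z)
    (ρ : Representation ℂ W V)
    (aV : ℝ) (haV : 0 < aV)
    (S : Wt → ℂ)
    (hgen : ∀ g : Wt, S (z * g) = -S g)
    (hS : ∀ g : Wt, S g * star (S g) =
      (aV : ℂ) * LinearMap.det ((1 : Module.End ℂ V) + ρ (p g))) :
    (∀ χ χ' : W → ℂ,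
      (1 / (Fintype.card Wt : ℂ)) *
          ∑ g : Wt, (χ (p g) * S g) * star (χ' (p g) * S g)
        = (aV : ℂ) * ((1 / (Fintype.card W : ℂ)) *
            ∑ w : W, χ w * star (χ' w) *
              LinearMap.det ((1 : Module.End ℂ V) + ρ w)))
    ∧ (∀ χ : W → ℂ,
        (∀ χ' : W → ℂ,
          (1 / (Fintype.card W : ℂ)) *
              ∑ w : W, χ w * star (χ' w) *
                LinearMap.det ((1 : Module.End ℂ V) + ρ w) = 0)
          ↔ ∀ g : Wt, χ (p g) * S g = 0) := by
  classical
  have haV0 : (aV : ℂ) ≠ 0 := by exact_mod_cast haV.ne'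
  set D : W → ℂ := fun w => LinearMap.det ((1 : Module.End ℂ V) + ρ w) with hD
  -- fiber cardinality is 2
  have hfib : ∀ w : W, (Finset.univ.filter (fun g : Wt => p g = w)).card = 2 := by
    intro w
    obtain ⟨g₀, hg₀⟩ := hp w
    have hzg : z * g₀ ≠ g₀ := fun h => hz1 (by
      have := mul_right_cancel (b := g₀) (by simpa using h); simpa using this)
    have hset : (Finset.univ.filter (fun g : Wt => p g = w)) = {g₀, z * g₀} := by
      ext g
      simp only [Finset.mem_filter, Finset.mem_univ, true_and, Finset.mem_insert,
        Finset.mem_singleton]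
      constructor
      · intro hg
        have h1 : p (g * g₀⁻¹) = 1 := by
          rw [map_mul, map_inv, hg, hg₀, mul_inv_cancel]
        rcases (hker _).1 h1 with h | h
        · left
          have := congrArg (· * g₀) h
          simpa [mul_assoc] using this
        · right
          have := congrArg (· * g₀) h
          simpa [mul_assoc] using this
      · have pz1 : p z = 1 := (hker z).2 (Or.inr rfl)
        rintro (rfl | rfl)
        · exact hg₀
        · rw [map_mul, pz1, one_mul, hg₀]
    rw [hset, Finset.card_insert_of_notMem (by simpa using hzg.symm),
      Finset.card_singleton]
  -- sums over Wt of fiber-constant functions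
  have hsum : ∀ F : W → ℂ, ∑ g : Wt, F (p g) = 2 * ∑ w : W, F w := by
    intro F
    rw [Finset.sum_comp F p, Finset.image_univ_of_surjective hp, Finset.mul_sum]
    refine Finset.sum_congr rfl fun w _ => ?_
    rw [hfib w]
    simp [two_smul, two_mul]
  have hcard : (Fintype.card Wt : ℂ) = 2 * (Fintype.card W : ℂ) := by
    have := hsum (fun _ => (1 : ℂ))
    simpa [Finset.card_univ] using this
  have hcardW : (Fintype.card W : ℂ) ≠ 0 := by
    exact_mod_cast (Fintype.card_pos).ne'
  constructor
  · intro χ χ'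
    have hterm : ∀ g : Wt, (χ (p g) * S g) * star (χ' (p g) * S g)
        = (fun w => (aV : ℂ) * (χ w * star (χ' w) * D w)) (p g) := by
      intro g
      have : (χ (p g) * S g) * star (χ' (p g) * S g)
          = χ (p g) * star (χ' (p g)) * (S g * star (S g)) := by
        rw [star_mul]; ring
      rw [this, hS g]
      ring
    rw [Finset.sum_congr rfl (fun g _ => hterm g),
      hsum (fun w => (aV : ℂ) * (χ w * star (χ' w) * D w)), hcard]
    simp only [hD]
    rw [← Finset.mul_sum]
    field_simp
  · intro χ
    constructor
    · intro H g
      -- real nonnegative decomposition of det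
      have hDg : ∀ g' : Wt, (aV : ℂ) * D (p g') = (Complex.normSq (S g') : ℂ) := by
        intro g'
        rw [← hS g', Complex.star_def, Complex.mul_conj]
      have hsum0 : ∑ w : W, χ w * star (χ w) * D w = 0 := by
        have := H χ
        field_simp at this
        rw [mul_zero] at this
        exact this
      -- multiply through by aV and convert to a real sum
      set Dr : W → ℝ := fun w => Complex.normSq (S (Classical.choose (hp w))) with hDr
      have hDw : ∀ w : W, (aV : ℂ) * D w = (Dr w : ℂ) := by
        intro w
        have := hDg (Classical.choose (hp w))
        rwa [Classical.choose_spec (hp w)] at this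
      have hreal : (↑(∑ w : W, Complex.normSq (χ w) * Dr w) : ℂ) = 0 := by
        push_cast
        calc (∑ w : W, (Complex.normSq (χ w) : ℂ) * (Dr w : ℂ))
            = ∑ w : W, (aV : ℂ) * (χ w * star (χ w) * D w) := by
              refine Finset.sum_congr rfl fun w _ => ?_
              rw [← hDw w, Complex.star_def, Complex.mul_conj]
              ring
          _ = (aV : ℂ) * ∑ w : W, χ w * star (χ w) * D w := by
              rw [Finset.mul_sum]
          _ = 0 := by rw [hsum0, mul_zero]
      have hreal' : ∑ w : W, Complex.normSq (χ w) * Dr w = 0 := by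
        exact_mod_cast hreal
      have hterm0 : Complex.normSq (χ (p g)) * Dr (p g) = 0 := by
        have hnonneg : ∀ w ∈ (Finset.univ : Finset W),
            0 ≤ Complex.normSq (χ w) * Dr w := fun w _ =>
          mul_nonneg (Complex.normSq_nonneg _) (Complex.normSq_nonneg _)
        exact (Finset.sum_eq_zero_iff_of_nonneg hnonneg).1 hreal' (p g) (Finset.mem_univ _)
      -- Dr (p g) = normSq (S g)
      have hSg : (Complex.normSq (S g) : ℂ) = (Dr (p g) : ℂ) := by
        rw [← hDg g, hDw (p g)]
      have hSg' : Complex.normSq (S g) = Dr (p g) := by exact_mod_cast hSg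
      have : Complex.normSq (χ (p g) * S g) = 0 := by
        rw [Complex.normSq_mul, hSg', hterm0]
      exact Complex.normSq_eq_zero.1 this
    · intro H χ'
      have hterm0 : ∀ w : W, χ w * D w = 0 := by
        intro w
        obtain ⟨g, hg⟩ := hp w
        have h1 : χ w * (S g * star (S g)) = 0 := by
          have := H g
          rw [hg] at this
          rw [← mul_assoc, this, zero_mul]
        rw [hS g, hg] at h1
        have : (aV : ℂ) * (χ w * D w) = 0 := by rw [← h1]; ring
        exact (mul_eq_zero.1 this).resolve_left haV0
      have : ∑ w : W, χ w * star (χ' w) * D w = 0 := by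
        refine Finset.sum_eq_zero fun w _ => ?_
        calc χ w * star (χ' w) * D w = (χ w * D w) * star (χ' w) := by ring
          _ = 0 := by rw [hterm0 w, zero_mul]
      rw [this, mul_zero]
end
end
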